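/- The trace of the Jacobi endomorphism of the spray G^i = P y^i, with P = -(2L + ⟨c',y⟩)/(2h), equals (n-1) F², where F² = (4hQ - (2L + ⟨c',y⟩)²)/(2h)². Hence the metric F has constant flag curvature 1 (Ricci scalar ρ = F²). -/

import Mathlib

open Finset

/-- Partial derivative of `f` with respect to the `i`-th coordinate at `x`. -/
noncomputable def pd {n : ℕ} (i : Fin n) (f : (Fin n → ℝ) → ℝ) (x : Fin n → ℝ) : ℝ :=
  deriv (fun t => f (Function.update x i t)) (x i)

/-- Partial derivative with respect to the `i`-th `x`-coordinate. -/
noncomputable def pdx {n : ℕ} (i : Fin n) (f : (Fin n → ℝ) → (Fin n → ℝ) → ℝ)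
    (x y : Fin n → ℝ) : ℝ :=
  deriv (fun t => f (Function.update x i t) y) (x i)

/-- Partial derivative with respect to the `i`-th `y`-coordinate. -/
noncomputable def pdy {n : ℕ} (i : Fin n) (f : (Fin n → ℝ) → (Fin n → ℝ) → ℝ)
    (x y : Fin n → ℝ) : ℝ :=
  deriv (fun t => f x (Function.update y i t)) (y i)

lemma hdu {n : ℕ} (x : Fin n → ℝ) (j i : Fin n) (t : ℝ) :
    HasDerivAt (fun s => Function.update x j s i) (if i = j then 1 else 0) t := by
  rcases eq_or_ne i j with hij | hij
  · subst hij
    simp only [Function.update_self, if_pos rfl]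
    exact hasDerivAt_id t
  · simp only [Function.update_of_ne hij, if_neg hij]
    exact hasDerivAt_const t _

lemma lin_deriv {n : ℕ} (a v : Fin n → ℝ) (j : Fin n) (t : ℝ) :
    HasDerivAt (fun s => ∑ k, a k * Function.update v j s k) (a j) t := by
  have h := HasDerivAt.fun_sum (fun k (_ : k ∈ Finset.univ) => (hdu v j k t).const_mul (a k))
  simpa [mul_ite, mul_one, mul_zero, Finset.sum_ite_eq'] using h

lemma bilinx_deriv {n : ℕ} (C : Fin n → Fin n → ℝ) (w v : Fin n → ℝ) (j : Fin n) (t : ℝ) :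
    HasDerivAt (fun s => ∑ r, ∑ k, C r k * Function.update v j s r * w k)
      (∑ k, C j k * w k) t := by
  have h := HasDerivAt.fun_sum (fun r (_ : r ∈ Finset.univ) =>
    HasDerivAt.fun_sum (fun k (_ : k ∈ Finset.univ) =>
      ((hdu v j r t).const_mul (C r k)).mul_const (w k)))
  refine h.congr_deriv ?_
  simp [Finset.sum_ite_eq']

lemma quad_deriv {n : ℕ} (C : Fin n → Fin n → ℝ) (v : Fin n → ℝ) (j : Fin n) :
    HasDerivAt (fun s => ∑ r, ∑ k, C r k * Function.update v j s r * Function.update v j s k)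
      ((∑ k, C j k * v k) + (∑ r, C r j * v r)) (v j) := by
  have h := HasDerivAt.fun_sum (fun r (_ : r ∈ Finset.univ) =>
    HasDerivAt.fun_sum (fun k (_ : k ∈ Finset.univ) =>
      (((hdu v j r (v j)).const_mul (C r k)).fun_mul (hdu v j k (v j)))))
  refine h.congr_deriv ?_
  simp only [Function.update_eq_self, mul_ite, ite_mul, mul_one, mul_zero, zero_mul,
    Finset.sum_add_distrib, Finset.sum_ite_irrel, Finset.sum_ite_eq', Finset.sum_ite_of_false,
    Finset.mem_univ, if_true]
  simp [Finset.sum_ite_eq']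


/-- The trace of the Jacobi endomorphism equals `(n-1) F²`; hence the metric has
constant flag curvature `1`. -/
theorem stmt7 (n : ℕ) (hn : 1 ≤ n) (C : Fin n → Fin n → ℝ) (c' : Fin n → ℝ) (c : ℝ)
    (hsym : ∀ i j, C i j = C j i)
    (h : (Fin n → ℝ) → ℝ)
    (hh : ∀ x, h x = (∑ i, ∑ j, C i j * x i * x j) + (∑ k, c' k * x k) + c)
    (P : (Fin n → ℝ) → (Fin n → ℝ) → ℝ)
    (hP : ∀ x y, P x y =
      -(2 * (∑ i, ∑ j, C i j * x i * y j) + ∑ k, c' k * y k) / (2 * h x))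
    (G : Fin n → (Fin n → ℝ) → (Fin n → ℝ) → ℝ)
    (hG : ∀ i x y, G i x y = P x y * y i)
    (N : Fin n → Fin n → (Fin n → ℝ) → (Fin n → ℝ) → ℝ)
    (hN : ∀ i j x y, N i j x y = pdy j (G i) x y)
    (Gc : Fin n → Fin n → Fin n → (Fin n → ℝ) → (Fin n → ℝ) → ℝ)
    (hGc : ∀ i j k x y, Gc i j k x y = pdy k (N i j) x y)
    (R : Fin n → Fin n → (Fin n → ℝ) → (Fin n → ℝ) → ℝ)
    (hR : ∀ i j x y, R i j x y =
      2 * pdx j (G i) x y - (∑ k, y k * pdx k (N i j) x y)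
        + 2 * (∑ k, G k x y * Gc i j k x y) - (∑ k, N i k x y * N k j x y)) :
    ∀ x y : Fin n → ℝ, h x > 0 →
      (∑ i, R i i x y) =
        ((n : ℝ) - 1) *
          ((4 * h x * (∑ r, ∑ s, C r s * y r * y s)
              - (2 * (∑ r, ∑ s, C r s * x r * y s) + ∑ k, c' k * y k) ^ 2)
            / (2 * h x) ^ 2) := by
  intro x y hx
  have hx' : h x ≠ 0 := ne_of_gt hx
  -- closed formula for N
  have keyN : ∀ (i j : Fin n) (x' y' : Fin n → ℝ),
      N i j x' y' = -(2 * (∑ r, C r j * x' r) + c' j) / (2 * h x') * y' i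
        + -(2 * (∑ r, ∑ s, C r s * x' r * y' s) + ∑ k, c' k * y' k) / (2 * h x') *
          (if i = j then 1 else 0) := by
    intro i j x' y'
    rw [hN, pdy]
    have hfun : (fun t => G i x' (Function.update y' j t)) =
        fun t => -(2 * (∑ r, ∑ s, C r s * x' r * Function.update y' j t s)
          + ∑ k, c' k * Function.update y' j t k) / (2 * h x') * Function.update y' j t i := by
      funext t; rw [hG, hP]
    rw [hfun]
    have hd1 : HasDerivAt (fun t => ∑ r, ∑ s, C r s * x' r * Function.update y' j t s)
        (∑ r, C r j * x' r) (y' j) := by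
      have hterm : ∀ r : Fin n, HasDerivAt (fun t => ∑ s, C r s * x' r * Function.update y' j t s)
          (C r j * x' r) (y' j) := fun r => lin_deriv (fun s => C r s * x' r) y' j (y' j)
      exact HasDerivAt.fun_sum (fun r _ => hterm r)
    have hd2 : HasDerivAt (fun t => ∑ k, c' k * Function.update y' j t k) (c' j) (y' j) :=
      lin_deriv c' y' j (y' j)
    have hd3 := (((hd1.const_mul 2).fun_add hd2).fun_neg.div_const (2 * h x')).fun_mul (hdu y' j i (y' j))
    rw [hd3.deriv]
    simp [Function.update_eq_self]
  have keyGc : ∀ i j k : Fin n, Gc i j k x y =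
      -(2 * (∑ r, C r j * x r) + c' j) / (2 * h x) * (if i = k then 1 else 0)
        + -(2 * (∑ r, C r k * x r) + c' k) / (2 * h x) * (if i = j then 1 else 0) := by
    intro i j k
    rw [hGc, pdy]
    have hfun : (fun t => N i j x (Function.update y k t)) =
        fun t => -(2 * (∑ r, C r j * x r) + c' j) / (2 * h x) * Function.update y k t i
          + -(2 * (∑ r, ∑ s, C r s * x r * Function.update y k t s)
              + ∑ m, c' m * Function.update y k t m) / (2 * h x) * (if i = j then 1 else 0) := by
      funext t; rw [keyN]
    rw [hfun]
    have hd1 := (hdu y k i (y k)).const_mul (-(2 * (∑ r, C r j * x r) + c' j) / (2 * h x))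
    have hd2 : HasDerivAt (fun t => ∑ r, ∑ s, C r s * x r * Function.update y k t s)
        (∑ r, C r k * x r) (y k) :=
      HasDerivAt.fun_sum (fun r _ => lin_deriv (fun s => C r s * x r) y k (y k))
    have hd3 := (((hd2.const_mul 2).fun_add (lin_deriv c' y k (y k))).fun_neg.div_const
      (2 * h x)).mul_const (if i = j then (1:ℝ) else 0)
    have hd4 := hd1.fun_add hd3
    rw [hd4.deriv]
  have hhd : ∀ j : Fin n, HasDerivAt (fun t => h (Function.update x j t))
      ((∑ s, C j s * x s) + (∑ r, C r j * x r) + c' j) (x j) := by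
    intro j
    have hfun : (fun t => h (Function.update x j t)) = fun t =>
        (∑ r, ∑ s, C r s * Function.update x j t r * Function.update x j t s)
          + (∑ k, c' k * Function.update x j t k) + c := by
      funext t; rw [hh]
    rw [hfun]
    exact ((quad_deriv C x j).add (lin_deriv c' x j (x j))).add_const c
  have hden : ∀ j : Fin n, HasDerivAt (fun t => 2 * h (Function.update x j t))
      (2 * ((∑ s, C j s * x s) + (∑ r, C r j * x r) + c' j)) (x j) := fun j => (hhd j).const_mul 2
  have hdenne : ∀ j : Fin n, (fun t => 2 * h (Function.update x j t)) (x j) ≠ 0 := by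
    intro j
    simp only [Function.update_eq_self]
    exact mul_ne_zero two_ne_zero hx'
  have keyGx : ∀ i j : Fin n, pdx j (G i) x y =
      (( -(2 * (∑ s, C j s * y s)) * (2 * h x)
          - -(2 * (∑ r, ∑ s, C r s * x r * y s) + ∑ k, c' k * y k)
            * (2 * ((∑ s, C j s * x s) + (∑ r, C r j * x r) + c' j)) ) / (2 * h x) ^ 2) * y i := by
    intro i j
    rw [pdx]
    have hfun : (fun t => G i (Function.update x j t) y) = fun t =>
        -(2 * (∑ r, ∑ s, C r s * Function.update x j t r * y s) + ∑ k, c' k * y k)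
          / (2 * h (Function.update x j t)) * y i := by
      funext t; rw [hG, hP]
    rw [hfun]
    have hnum : HasDerivAt
        (fun t => -(2 * (∑ r, ∑ s, C r s * Function.update x j t r * y s) + ∑ k, c' k * y k))
        (-(2 * (∑ s, C j s * y s))) (x j) := by
      have := (((bilinx_deriv C y x j (x j)).const_mul 2).add_const (∑ k, c' k * y k)).fun_neg
      simpa using this
    have hfin := (hnum.fun_div (hden j) (hdenne j)).mul_const (y i)
    rw [hfin.deriv]
    simp [Function.update_eq_self]
  have keyNx : ∀ i j k : Fin n, pdx k (N i j) x y =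
      (( -(2 * C k j) * (2 * h x)
          - -(2 * (∑ r, C r j * x r) + c' j)
            * (2 * ((∑ s, C k s * x s) + (∑ r, C r k * x r) + c' k)) ) / (2 * h x) ^ 2) * y i
      + (( -(2 * (∑ s, C k s * y s)) * (2 * h x)
          - -(2 * (∑ r, ∑ s, C r s * x r * y s) + ∑ m, c' m * y m)
            * (2 * ((∑ s, C k s * x s) + (∑ r, C r k * x r) + c' k)) ) / (2 * h x) ^ 2)
        * (if i = j then 1 else 0) := by
    intro i j k
    rw [pdx]
    have hfun : (fun t => N i j (Function.update x k t) y) = fun t =>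
        -(2 * (∑ r, C r j * Function.update x k t r) + c' j)
          / (2 * h (Function.update x k t)) * y i
        + -(2 * (∑ r, ∑ s, C r s * Function.update x k t r * y s) + ∑ m, c' m * y m)
          / (2 * h (Function.update x k t)) * (if i = j then 1 else 0) := by
      funext t; rw [keyN]
    rw [hfun]
    have hnum1 : HasDerivAt
        (fun t => -(2 * (∑ r, C r j * Function.update x k t r) + c' j)) (-(2 * C k j)) (x k) := by
      have := (((lin_deriv (fun r => C r j) x k (x k)).const_mul 2).add_const (c' j)).fun_neg
      simpa using this
    have hnum2 : HasDerivAt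
        (fun t => -(2 * (∑ r, ∑ s, C r s * Function.update x k t r * y s) + ∑ m, c' m * y m))
        (-(2 * (∑ s, C k s * y s))) (x k) := by
      have := (((bilinx_deriv C y x k (x k)).const_mul 2).add_const (∑ m, c' m * y m)).fun_neg
      simpa using this
    have hfin := ((hnum1.fun_div (hden k) (hdenne k)).mul_const (y i)).fun_add
      ((hnum2.fun_div (hden k) (hdenne k)).mul_const (if i = j then (1:ℝ) else 0))
    rw [hfin.deriv]
    simp [Function.update_eq_self]
  -- symmetric-sum facts
  have hSA : ∀ j : Fin n, (∑ s, C j s * x s) = ∑ r, C r j * x r := fun j =>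
    Finset.sum_congr rfl fun s _ => by rw [hsym]
  have fact4 : ∀ i : Fin n, (∑ k, C k i * y k) = ∑ s, C i s * y s := fun i =>
    Finset.sum_congr rfl fun k _ => by rw [hsym]
  have fact1 : ∑ j, (∑ r, C r j * x r) * y j = ∑ r, ∑ s, C r s * x r * y s := by
    have e : ∀ j : Fin n, (∑ r, C r j * x r) * y j = ∑ r, C r j * x r * y j := fun j => by
      rw [Finset.sum_mul]
    calc ∑ j, (∑ r, C r j * x r) * y j = ∑ j, ∑ r, C r j * x r * y j :=
          Finset.sum_congr rfl fun j _ => e j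
      _ = ∑ r, ∑ s, C r s * x r * y s := Finset.sum_comm
  have fact5 : ∑ k, (∑ s, C k s * x s) * y k = ∑ r, ∑ s, C r s * x r * y s := by
    calc ∑ k, (∑ s, C k s * x s) * y k = ∑ k, (∑ r, C r k * x r) * y k :=
          Finset.sum_congr rfl fun k _ => by rw [hSA k]
      _ = ∑ r, ∑ s, C r s * x r * y s := fact1
  have fact2 : ∑ j, (∑ s, C j s * y s) * y j = ∑ r, ∑ s, C r s * y r * y s := by
    have e : ∀ j : Fin n, (∑ s, C j s * y s) * y j = ∑ s, C j s * y j * y s := fun j => by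
      rw [Finset.sum_mul]; exact Finset.sum_congr rfl fun s _ => by ring
    exact Finset.sum_congr rfl fun j _ => e j
  have fact6 : ∑ i, (2 * (∑ r, C r i * x r) + c' i) * y i =
      2 * (∑ r, ∑ s, C r s * x r * y s) + ∑ k, c' k * y k := by
    calc ∑ i, (2 * (∑ r, C r i * x r) + c' i) * y i
        = ∑ i, (2 * ((∑ r, C r i * x r) * y i) + c' i * y i) :=
          Finset.sum_congr rfl fun i _ => by ring
      _ = 2 * (∑ i, (∑ r, C r i * x r) * y i) + ∑ k, c' k * y k := by
          rw [Finset.sum_add_distrib, ← Finset.mul_sum]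
      _ = _ := by rw [fact1]
  -- inner sum 2
  have inner2 : ∀ i : Fin n, (∑ k, y k * pdx k (N i i) x y) =
      (-(2 * (2 * h x)) * y i / (2 * h x) ^ 2) * (∑ s, C i s * y s)
      + (2 * (2 * (∑ r, C r i * x r) + c' i) * y i / (2 * h x) ^ 2)
        * (2 * (∑ r, ∑ s, C r s * x r * y s) + (∑ k, c' k * y k))
      + (-(2 * (2 * h x)) / (2 * h x) ^ 2) * (∑ r, ∑ s, C r s * y r * y s)
      + (2 * (2 * (∑ r, ∑ s, C r s * x r * y s) + (∑ k, c' k * y k)) / (2 * h x) ^ 2)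
        * (2 * (∑ r, ∑ s, C r s * x r * y s) + (∑ k, c' k * y k)) := by
    intro i
    have step : ∀ k : Fin n, y k * pdx k (N i i) x y =
        (-(2 * (2 * h x)) * y i / (2 * h x) ^ 2) * (C k i * y k)
        + (2 * (2 * (∑ r, C r i * x r) + c' i) * y i / (2 * h x) ^ 2) * ((∑ s, C k s * x s) * y k)
        + (2 * (2 * (∑ r, C r i * x r) + c' i) * y i / (2 * h x) ^ 2) * ((∑ r, C r k * x r) * y k)
        + (2 * (2 * (∑ r, C r i * x r) + c' i) * y i / (2 * h x) ^ 2) * (c' k * y k)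
        + (-(2 * (2 * h x)) / (2 * h x) ^ 2) * ((∑ s, C k s * y s) * y k)
        + (2 * (2 * (∑ r, ∑ s, C r s * x r * y s) + (∑ m, c' m * y m)) / (2 * h x) ^ 2)
          * ((∑ s, C k s * x s) * y k)
        + (2 * (2 * (∑ r, ∑ s, C r s * x r * y s) + (∑ m, c' m * y m)) / (2 * h x) ^ 2)
          * ((∑ r, C r k * x r) * y k)
        + (2 * (2 * (∑ r, ∑ s, C r s * x r * y s) + (∑ m, c' m * y m)) / (2 * h x) ^ 2)
          * (c' k * y k) := by
      intro k
      rw [keyNx i i k]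
      simp only [eq_self_iff_true, if_true, mul_one]
      ring
    calc (∑ k, y k * pdx k (N i i) x y) = ∑ k, _ := Finset.sum_congr rfl fun k _ => step k
      _ = _ := by
        simp only [Finset.sum_add_distrib, ← Finset.mul_sum]
        rw [fact4 i, fact5, fact1, fact2]
        ring
  -- inner sum 3
  have inner3 : ∀ i : Fin n, (∑ k, G k x y * Gc i i k x y) =
      ((2 * (∑ r, ∑ s, C r s * x r * y s) + (∑ k, c' k * y k))
          * (2 * (∑ r, C r i * x r) + c' i) / (2 * h x) ^ 2) * y i
      + (2 * (2 * (∑ r, ∑ s, C r s * x r * y s) + (∑ k, c' k * y k)) / (2 * h x) ^ 2)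
        * (∑ r, ∑ s, C r s * x r * y s)
      + ((2 * (∑ r, ∑ s, C r s * x r * y s) + (∑ k, c' k * y k)) / (2 * h x) ^ 2)
        * (∑ k, c' k * y k) := by
    intro i
    have step : ∀ k : Fin n, G k x y * Gc i i k x y =
        ((2 * (∑ r, ∑ s, C r s * x r * y s) + (∑ m, c' m * y m))
            * (2 * (∑ r, C r i * x r) + c' i) / (2 * h x) ^ 2)
          * ((if i = k then (1:ℝ) else 0) * y k)
        + (2 * (2 * (∑ r, ∑ s, C r s * x r * y s) + (∑ m, c' m * y m)) / (2 * h x) ^ 2)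
          * ((∑ r, C r k * x r) * y k)
        + ((2 * (∑ r, ∑ s, C r s * x r * y s) + (∑ m, c' m * y m)) / (2 * h x) ^ 2)
          * (c' k * y k) := by
      intro k
      rw [hG, hP, keyGc i i k]
      simp only [eq_self_iff_true, if_true, mul_one]
      ring
    calc (∑ k, G k x y * Gc i i k x y) = ∑ k, _ := Finset.sum_congr rfl fun k _ => step k
      _ = _ := by
        simp only [Finset.sum_add_distrib, ← Finset.mul_sum, ite_mul, one_mul, zero_mul,
          Finset.sum_ite_eq, Finset.mem_univ, if_true]
        rw [fact1]
  -- inner sum 4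
  have inner4 : ∀ i : Fin n, (∑ k, N i k x y * N k i x y) =
      (2 * (2 * (∑ r, C r i * x r) + c' i) * y i / (2 * h x) ^ 2)
        * (∑ r, ∑ s, C r s * x r * y s)
      + ((2 * (∑ r, C r i * x r) + c' i) * y i / (2 * h x) ^ 2) * (∑ k, c' k * y k)
      + (2 * (-(2 * (∑ r, ∑ s, C r s * x r * y s) + ∑ k, c' k * y k) / (2 * h x))
          * (-(2 * (∑ r, C r i * x r) + c' i) / (2 * h x)) * y i
        + (-(2 * (∑ r, ∑ s, C r s * x r * y s) + ∑ k, c' k * y k) / (2 * h x)) ^ 2) := by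
    intro i
    have step : ∀ k : Fin n, N i k x y * N k i x y =
        (2 * (2 * (∑ r, C r i * x r) + c' i) * y i / (2 * h x) ^ 2)
          * ((∑ r, C r k * x r) * y k)
        + ((2 * (∑ r, C r i * x r) + c' i) * y i / (2 * h x) ^ 2) * (c' k * y k)
        + (if i = k then
            (2 * (-(2 * (∑ r, ∑ s, C r s * x r * y s) + ∑ m, c' m * y m) / (2 * h x))
              * (-(2 * (∑ r, C r i * x r) + c' i) / (2 * h x)) * y i
            + (-(2 * (∑ r, ∑ s, C r s * x r * y s) + ∑ m, c' m * y m) / (2 * h x)) ^ 2)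
          else 0) := by
      intro k
      rw [keyN i k x y, keyN k i x y]
      rcases eq_or_ne i k with hik | hik
      · subst hik
        simp only [eq_self_iff_true, if_true, mul_one]
        ring
      · simp only [if_neg hik, if_neg (Ne.symm hik), mul_zero, add_zero]
        ring
    calc (∑ k, N i k x y * N k i x y) = ∑ k, _ := Finset.sum_congr rfl fun k _ => step k
      _ = _ := by
        simp only [Finset.sum_add_distrib, ← Finset.mul_sum, Finset.sum_ite_eq,
          Finset.mem_univ, if_true]
        rw [fact1]
  -- per-index closed form of R i i
  have hRi : ∀ i : Fin n, R i i x y =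
      (-2 / (2 * h x)) * ((∑ s, C i s * y s) * y i)
      + ((2 * (∑ r, ∑ s, C r s * x r * y s) + ∑ k, c' k * y k) / (2 * h x) ^ 2)
        * ((2 * (∑ r, C r i * x r) + c' i) * y i)
      + (2 * (∑ r, ∑ s, C r s * y r * y s) * (2 * h x)
          - (2 * (∑ r, ∑ s, C r s * x r * y s) + ∑ k, c' k * y k) ^ 2) / (2 * h x) ^ 2 := by
    intro i
    rw [hR, keyGx i i, inner2 i, inner3 i, inner4 i, hSA i]
    field_simp
    ring
  calc (∑ i, R i i x y) = ∑ i, _ := Finset.sum_congr rfl fun i _ => hRi i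
    _ = _ := by
      simp only [Finset.sum_add_distrib, ← Finset.mul_sum, Finset.sum_const, Finset.card_univ,
        Fintype.card_fin, nsmul_eq_mul]
      rw [fact2, fact6]
      field_simp
      ring
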